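/- Let T and R be strings with |R| = m ≥ 2, and consider the Δ-core R-factorization of T for a positive integer Δ. Any fragment of T that occurs as a substring of R overlaps at most 8·(log₂ m)² phrases of this factorization; consequently, the Δ-core R-factorization is ⌈8 log₂² m + 2⌉-optimal. -/

import Mathlib

/-- Length of the longest prefix of `T` that is a substring of `R`. -/
def lpf (R T : List ℕ) : ℕ :=
  Nat.findGreatest (fun ℓ => (T.take ℓ) <:+: R) T.length

/-- The greedy Lempel–Ziv factorization of `T` relative to `R`. -/
def rlz (R : List ℕ) (T : List ℕ) : List (List ℕ) :=
  if hT : T = [] then []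
  else if h0 : lpf R T = 0 then [T.headI] :: rlz R T.tail
  else T.take (lpf R T) :: rlz R (T.drop (lpf R T))
termination_by T.length
decreasing_by
  · cases T with
    | nil => exact absurd rfl hT
    | cons a t => simp
  · have h1 : T.length ≠ 0 := fun h => hT (List.eq_nil_of_length_eq_zero h)
    simp only [List.length_drop]
    omega

/-- The `Δ`-core `R`-factorization of `T` (phrases listed left to right).
A meta-phrase starting at the current suffix `T` is `T[0..2^{J+1}Δ)` where `J`
is maximal with `T[0..3·2^J·Δ)` occurring in `R` (if some such `J ≥ 0` exists),
and `T[0..min(Δ,|T|))` otherwise.  The length-`Δ` prefix of a meta-phrase is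
factorized greedily relative to `R`, and (in the successful case) the rest is
split into phrases of lengths `Δ, 2Δ, 4Δ, …, 2^J·Δ`. -/
def deltaCore (R : List ℕ) (Δ : ℕ) (T : List ℕ) : List (List ℕ) :=
  if hT : T = [] then []
  else if hΔ : Δ = 0 then [T]
  else if h0 : 3 * Δ ≤ T.length ∧ (T.take (3 * Δ)) <:+: R then
    let J := Nat.findGreatest
      (fun j => 3 * 2 ^ j * Δ ≤ T.length ∧ (T.take (3 * 2 ^ j * Δ)) <:+: R) T.length
    (rlz R (T.take Δ) ++
      (List.range (J + 1)).map (fun h => (T.drop (2 ^ h * Δ)).take (2 ^ h * Δ)))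
      ++ deltaCore R Δ (T.drop (2 ^ (J + 1) * Δ))
  else rlz R (T.take Δ) ++ deltaCore R Δ (T.drop Δ)
termination_by T.length
decreasing_by
  · have h1 : T.length ≠ 0 := fun h => hT (List.eq_nil_of_length_eq_zero h)
    have h2 : 1 ≤ 2 ^ (Nat.findGreatest
      (fun j => 3 * 2 ^ j * Δ ≤ T.length ∧ (T.take (3 * 2 ^ j * Δ)) <:+: R) T.length + 1) * Δ := by
      have := Nat.one_le_two_pow (n := Nat.findGreatest
        (fun j => 3 * 2 ^ j * Δ ≤ T.length ∧ (T.take (3 * 2 ^ j * Δ)) <:+: R) T.length + 1)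
      exact Nat.le_mul_of_pos_right _ (Nat.pos_of_ne_zero hΔ) |>.trans' (by omega)
    simp only [List.length_drop]
    omega
  · have h1 : T.length ≠ 0 := fun h => hT (List.eq_nil_of_length_eq_zero h)
    simp only [List.length_drop]
    omega

/-- Starting position (within `T`) of the `j`-th phrase of a factorization. -/
def startOf (fs : List (List ℕ)) (j : ℕ) : ℕ :=
  ((fs.take j).map List.length).sum

/-- `fs` is `α`-optimal: no `α` consecutive phrases concatenate to a substring
of `R`. -/
def AlphaOptimal (R : List ℕ) (α : ℕ) (fs : List (List ℕ)) : Prop :=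
  ∀ i, i + α ≤ fs.length → ¬ (((fs.drop i).take α).flatten <:+: R)

namespace Scratch

/-- recursive overlap counter -/
def cnt : List (List ℕ) → ℕ → ℕ → ℕ
  | [], _, _ => 0
  | a :: fs, s, e =>
      (if 0 < e ∧ s < a.length then 1 else 0) + cnt fs (s - a.length) (e - a.length)

def g (ℓ : ℕ) : ℕ :=
  if h : ℓ = 0 then 0 else g ((2 * ℓ - 1) / 3) + 1
termination_by ℓ
decreasing_by
  exact (Nat.div_lt_iff_lt_mul (by norm_num)).2 (by omega)

lemma g_zero : g 0 = 0 := by rw [g]; rfl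

lemma g_eq (ℓ : ℕ) (h : ℓ ≠ 0) : g ℓ = g ((2 * ℓ - 1) / 3) + 1 := by
  rw [g]; simp [h]

lemma g_pos (ℓ : ℕ) (h : ℓ ≠ 0) : 1 ≤ g ℓ := by rw [g_eq ℓ h]; omega

lemma g_mono : ∀ {a b : ℕ}, a ≤ b → g a ≤ g b := by
  intro a b
  induction b using Nat.strong_induction_on generalizing a with
  | _ b ih =>
    intro hab
    rcases Nat.eq_zero_or_pos a with rfl | ha
    · simp [g_zero]
    have hb : b ≠ 0 := by omega
    rw [g_eq a (by omega), g_eq b hb]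
    have h1 : (2 * a - 1) / 3 ≤ (2 * b - 1) / 3 := Nat.div_le_div_right (by omega)
    have h2 : (2 * b - 1) / 3 < b := (Nat.div_lt_iff_lt_mul (by norm_num)).2 (by omega)
    exact Nat.succ_le_succ (ih _ h2 h1)

lemma g_exp : ∀ ℓ : ℕ, 3 ^ g ℓ ≤ (2 * ℓ + 1) * 2 ^ g ℓ := by
  intro ℓ
  induction ℓ using Nat.strong_induction_on with
  | _ ℓ ih =>
    rcases Nat.eq_zero_or_pos ℓ with rfl | hl
    · simp [g_zero]
    have hne : ℓ ≠ 0 := by omega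
    rw [g_eq ℓ hne]
    set ℓ' := (2 * ℓ - 1) / 3 with hℓ'
    have hlt : ℓ' < ℓ := (Nat.div_lt_iff_lt_mul (by norm_num)).2 (by omega)
    have h3 : 3 * ℓ' ≤ 2 * ℓ - 1 := by
      have := Nat.div_mul_le_self (2 * ℓ - 1) 3
      omega
    have := ih ℓ' hlt
    calc 3 ^ (g ℓ' + 1) = 3 * 3 ^ g ℓ' := by ring
    _ ≤ 3 * ((2 * ℓ' + 1) * 2 ^ g ℓ') := by omega
    _ = (6 * ℓ' + 3) * 2 ^ g ℓ' := by ring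
    _ ≤ (2 * ℓ + 1) * 2 ^ (g ℓ' + 1) := by
        have : 6 * ℓ' + 3 ≤ (2 * ℓ + 1) * 2 := by omega
        calc (6 * ℓ' + 3) * 2 ^ g ℓ' ≤ ((2 * ℓ + 1) * 2) * 2 ^ g ℓ' :=
              Nat.mul_le_mul_right _ this
        _ = (2 * ℓ + 1) * 2 ^ (g ℓ' + 1) := by ring

/-- `g m ≤ 2 * log₂ m + 4` -/
lemma g_le (m : ℕ) (hm : 1 ≤ m) : g m ≤ 2 * Nat.log 2 m + 4 := by
  set G := g m
  have h1 : 3 ^ G ≤ (2 * m + 1) * 2 ^ G := g_exp m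
  have h2 : 2 ^ G * 4 ^ G ≤ (2 * m + 1) ^ 2 * 4 ^ G := by
    calc 2 ^ G * 4 ^ G = 8 ^ G := by
          rw [← Nat.mul_pow]
    _ ≤ 9 ^ G := Nat.pow_le_pow_left (by norm_num) _
    _ = (3 ^ G) ^ 2 := by rw [← Nat.pow_mul, Nat.mul_comm G 2, Nat.pow_mul]
    _ ≤ ((2 * m + 1) * 2 ^ G) ^ 2 := Nat.pow_le_pow_left h1 _
    _ = (2 * m + 1) ^ 2 * 4 ^ G := by
          rw [Nat.mul_pow, ← Nat.pow_mul, Nat.mul_comm G 2, Nat.pow_mul]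
  have h3 : 2 ^ G ≤ (2 * m + 1) ^ 2 :=
    Nat.le_of_mul_le_mul_right h2 (Nat.pow_pos (by norm_num))
  have h4 : 2 * m + 1 ≤ 2 ^ (Nat.log 2 m + 2) := by
    have h5 := Nat.lt_pow_succ_log_self (by norm_num : 1 < 2) m
    have h6 : 2 ^ (Nat.log 2 m + 2) = 2 * 2 ^ (Nat.log 2 m + 1) := by ring
    omega
  have h7 : 2 ^ G ≤ 2 ^ (2 * Nat.log 2 m + 4) := by
    calc 2 ^ G ≤ (2 * m + 1) ^ 2 := h3
    _ ≤ (2 ^ (Nat.log 2 m + 2)) ^ 2 := Nat.pow_le_pow_left h4 2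
    _ = 2 ^ (2 * Nat.log 2 m + 4) := by rw [← Nat.pow_mul]; ring_nf
  exact (Nat.pow_le_pow_iff_right (by norm_num)).1 h7

@[simp] lemma cnt_nil (s e : ℕ) : cnt [] s e = 0 := rfl

lemma cnt_cons (a : List ℕ) (fs : List (List ℕ)) (s e : ℕ) :
    cnt (a :: fs) s e =
      (if 0 < e ∧ s < a.length then 1 else 0) + cnt fs (s - a.length) (e - a.length) := rfl

lemma cnt_e_zero (fs : List (List ℕ)) (s : ℕ) : cnt fs s 0 = 0 := by
  induction fs generalizing s with
  | nil => rfl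
  | cons a fs ih => simp [cnt_cons, ih]

lemma cnt_append (A B : List (List ℕ)) (s e : ℕ) :
    cnt (A ++ B) s e =
      cnt A s e + cnt B (s - (A.map List.length).sum) (e - (A.map List.length).sum) := by
  induction A generalizing s e with
  | nil => simp
  | cons a A ih =>
    simp only [List.cons_append, cnt_cons, ih, List.map_cons, List.sum_cons]
    have h1 : s - a.length - (A.map List.length).sum = s - (a.length + (A.map List.length).sum) := by omega
    have h2 : e - a.length - (A.map List.length).sum = e - (a.length + (A.map List.length).sum) := by omega
    rw [h1, h2]; ring

lemma cnt_le_length (fs : List (List ℕ)) (s e : ℕ) : cnt fs s e ≤ fs.length := by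
  induction fs generalizing s e with
  | nil => simp
  | cons a fs ih =>
    simp only [cnt_cons, List.length_cons]
    have := ih (s - a.length) (e - a.length)
    split <;> omega

lemma cnt_zero_of_sum_le (A : List (List ℕ)) (s e : ℕ) (h : (A.map List.length).sum ≤ s) :
    cnt A s e = 0 := by
  induction A generalizing s e with
  | nil => rfl
  | cons a A ih =>
    simp only [List.map_cons, List.sum_cons] at h
    simp only [cnt_cons]
    rw [if_neg (by omega), ih _ (e - a.length) (by omega)]

lemma cnt_diag (fs : List (List ℕ)) (s : ℕ) : cnt fs s s ≤ 1 := by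
  induction fs generalizing s with
  | nil => simp
  | cons a fs ih =>
    simp only [cnt_cons]
    rcases Nat.lt_or_ge s a.length with h | h
    · have : s - a.length = 0 := by omega
      rw [this, cnt_e_zero]
      split <;> omega
    · rw [if_neg (by omega)]
      simpa using ih (s - a.length)

@[simp] lemma startOf_zero (fs : List (List ℕ)) : startOf fs 0 = 0 := by simp [startOf]

lemma startOf_cons_succ (a : List ℕ) (fs : List (List ℕ)) (j : ℕ) :
    startOf (a :: fs) (j + 1) = a.length + startOf fs j := by
  simp [startOf]

lemma startOf_succ (fs : List (List ℕ)) (j : ℕ) (hj : j < fs.length) :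
    startOf fs (j + 1) = startOf fs j + (fs.getD j []).length := by
  induction fs generalizing j with
  | nil => simp at hj
  | cons a fs ih =>
    cases j with
    | zero => simp [startOf_cons_succ, startOf]
    | succ j =>
      rw [startOf_cons_succ, startOf_cons_succ, List.getD_cons_succ,
        ih j (by simpa using hj)]
      omega

lemma sum_take_le (l : List ℕ) (n : ℕ) : (l.take n).sum ≤ l.sum := by
  conv_rhs => rw [← List.take_append_drop n l]
  rw [List.sum_append]
  omega

lemma startOf_eq (fs : List (List ℕ)) (j : ℕ) :
    startOf fs j = ((fs.map List.length).take j).sum := by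
  rw [startOf, List.map_take]

lemma startOf_mono (fs : List (List ℕ)) {i j : ℕ} (h : i ≤ j) : startOf fs i ≤ startOf fs j := by
  rw [startOf_eq, startOf_eq]
  have : (fs.map List.length).take i = ((fs.map List.length).take j).take i := by
    rw [List.take_take, Nat.min_eq_left h]
  rw [this]
  exact sum_take_le _ _

lemma startOf_le_sum (fs : List (List ℕ)) (j : ℕ) :
    startOf fs j ≤ (fs.map List.length).sum := by
  rw [startOf_eq]; exact sum_take_le _ _

/-- `cnt` equals the `Finset` count, provided all phrases are nonempty. -/
lemma cnt_eq (fs : List (List ℕ)) (h : ∀ ph ∈ fs, ph ≠ []) (s e : ℕ) :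
    cnt fs s e = ((Finset.range fs.length).filter (fun j =>
      startOf fs j < e ∧ s < startOf fs j + (fs.getD j []).length)).card := by
  induction fs generalizing s e with
  | nil => simp
  | cons a fs ih =>
    rw [Finset.card_filter]
    rw [List.length_cons, Finset.sum_range_succ']
    have hstep : ∀ j ∈ Finset.range fs.length,
        (if startOf (a :: fs) (j+1) < e ∧ s < startOf (a :: fs) (j+1) + ((a :: fs).getD (j+1) []).length then 1 else 0)
        = (if startOf fs j < e - a.length ∧ s - a.length < startOf fs j + (fs.getD j []).length then (1:ℕ) else 0) := by
      intro j hj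
      rw [Finset.mem_range] at hj
      have hne : fs.getD j [] ≠ [] := h _ (List.mem_cons_of_mem _ (by rw [List.getD_eq_getElem _ _ hj]; exact List.getElem_mem _))
      have hlen : 0 < (fs.getD j []).length := List.length_pos_iff.2 hne
      rw [startOf_cons_succ, List.getD_cons_succ]
      refine if_congr ?_ rfl rfl
      omega
    rw [Finset.sum_congr rfl hstep]
    rw [cnt_cons, ih (fun ph hph => h ph (List.mem_cons_of_mem _ hph)) (s - a.length) (e - a.length)]
    rw [Finset.card_filter]
    simp only [startOf_zero, List.getD_cons_zero, Nat.zero_add]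
    omega

lemma lpf_le (R T : List ℕ) : lpf R T ≤ T.length := Nat.findGreatest_le _

lemma le_lpf {R T : List ℕ} {ℓ : ℕ} (h1 : ℓ ≤ T.length) (h2 : T.take ℓ <:+: R) :
    ℓ ≤ lpf R T := Nat.le_findGreatest h1 h2

lemma min_le_lpf {R T : List ℕ} {e : ℕ} (h : T.take e <:+: R) : min e T.length ≤ lpf R T := by
  apply le_lpf (min_le_right _ _)
  rcases Nat.le_total e T.length with h1 | h1
  · rwa [Nat.min_eq_left h1]
  · rwa [Nat.min_eq_right h1, List.take_length, ← List.take_of_length_le h1]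

lemma rlz_flatten (R : List ℕ) : ∀ n (T : List ℕ), T.length ≤ n → (rlz R T).flatten = T := by
  intro n
  induction n with
  | zero =>
    intro T h
    have : T = [] := List.eq_nil_of_length_eq_zero (by omega)
    subst this; rw [rlz]; simp
  | succ n ih =>
    intro T h
    rw [rlz]
    split_ifs with hT h0
    · simp [hT]
    · rcases T with _ | ⟨a, t⟩
      · exact absurd rfl hT
      · simp only [List.flatten_cons, List.headI_cons, List.tail_cons]
        rw [ih t (by simp only [List.length_cons] at h; omega)]
        simp
    · simp only [List.flatten_cons]
      rw [ih (T.drop (lpf R T)) (by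
        have h1 : T.length ≠ 0 := fun hh => hT (List.eq_nil_of_length_eq_zero hh)
        simp only [List.length_drop]; omega)]
      exact List.take_append_drop _ _

lemma rlz_ne_nil (R : List ℕ) : ∀ n (T : List ℕ), T.length ≤ n →
    ∀ ph ∈ rlz R T, ph ≠ [] := by
  intro n
  induction n with
  | zero =>
    intro T h
    have : T = [] := List.eq_nil_of_length_eq_zero (by omega)
    subst this; rw [rlz]; simp
  | succ n ih =>
    intro T h ph hph
    rw [rlz] at hph
    split_ifs at hph with hT h0
    · simp at hph
    · rcases List.mem_cons.1 hph with rfl | hmem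
      · simp
      · refine ih T.tail ?_ ph hmem
        rcases T with _ | ⟨a, t⟩; · exact absurd rfl hT
        simp only [List.tail_cons]
        simp only [List.length_cons] at h; omega
    · rcases List.mem_cons.1 hph with rfl | hmem
      · have h1 : T.length ≠ 0 := fun hh => hT (List.eq_nil_of_length_eq_zero hh)
        have : (T.take (lpf R T)).length = lpf R T := by
          rw [List.length_take, Nat.min_eq_left (lpf_le R T)]
        intro hc
        rw [hc] at this
        simp at this
        omega
      · exact ih (T.drop (lpf R T)) (by
          have h1 : T.length ≠ 0 := fun hh => hT (List.eq_nil_of_length_eq_zero hh)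
          simp only [List.length_drop]; omega) ph hmem

/-- key greedy lemma: a fragment starting at 0 meets at most one phrase. -/
lemma cnt_rlz_zero (R T : List ℕ) (e : ℕ) (hfrag : T.take e <:+: R) :
    cnt (rlz R T) 0 e ≤ 1 := by
  rw [rlz]
  split_ifs with hT h0
  · simp
  · -- lpf = 0; but then e = 0 or contradiction
    rcases Nat.eq_zero_or_pos e with rfl | he
    · rw [cnt_e_zero]; omega
    · exfalso
      have h1 : 0 < T.length := List.length_pos_iff.2 hT
      have := min_le_lpf hfrag
      omega
  · rcases Nat.eq_zero_or_pos e with rfl | he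
    · rw [cnt_e_zero]; omega
    have h1 : 0 < T.length := List.length_pos_iff.2 hT
    have hmin : min e T.length ≤ lpf R T := min_le_lpf hfrag
    have hlpf : lpf R T ≤ T.length := lpf_le R T
    rw [cnt_cons]
    have hlen : (T.take (lpf R T)).length = lpf R T := by
      rw [List.length_take, Nat.min_eq_left hlpf]
    rw [hlen]
    have : cnt (rlz R (T.drop (lpf R T))) (0 - lpf R T) (e - lpf R T) = 0 := by
      rcases Nat.le_total e T.length with h2 | h2
      · have : e - lpf R T = 0 := by omega
        rw [this, cnt_e_zero]
      · have : lpf R T = T.length := by omega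
        rw [this, List.drop_length, rlz]
        simp
    rw [this]
    split <;> omega

lemma cnt_rlz (R : List ℕ) : ∀ n (T : List ℕ), T.length ≤ n → ∀ s e : ℕ, s ≤ e →
    ((T.drop s).take (e - s)) <:+: R → cnt (rlz R T) s e ≤ 2 := by
  intro n
  induction n with
  | zero =>
    intro T h s e _ _
    have : T = [] := List.eq_nil_of_length_eq_zero (by omega)
    subst this; rw [rlz]; simp
  | succ n ih =>
    intro T h s e hse hfrag
    rcases Nat.eq_zero_or_pos e with rfl | he
    · rw [cnt_e_zero]; omega
    rw [rlz]
    split_ifs with hT h0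
    · simp
    · -- lpf = 0 case: phrase [T.headI] of length 1
      have h1 : 0 < T.length := List.length_pos_iff.2 hT
      have hs : 0 < s := by
        by_contra hc
        push_neg at hc
        interval_cases s
        simp only [List.drop_zero, Nat.sub_zero] at hfrag
        have := min_le_lpf hfrag
        omega
      rw [cnt_cons]
      simp only [List.length_cons, List.length_nil]
      rw [if_neg (by omega)]
      have htail : T.tail = T.drop 1 := List.drop_one.symm
      have := ih T.tail (by rw [htail]; simp only [List.length_drop]; omega)
        (s - 1) (e - 1) (by omega) (by
          rw [htail, List.drop_drop]
          have h2 : 1 + (s - 1) = s := by omega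
          have h3 : e - 1 - (s - 1) = e - s := by omega
          rw [h2, h3]; exact hfrag)
      simp only [List.length_cons, List.length_nil, Nat.zero_add] at this ⊢
      omega
    · have h1 : 0 < T.length := List.length_pos_iff.2 hT
      have hlpf : lpf R T ≤ T.length := lpf_le R T
      set p := lpf R T with hp
      have hlen : (T.take p).length = p := by
        rw [List.length_take, Nat.min_eq_left hlpf]
      rw [cnt_cons, hlen]
      rcases Nat.lt_or_ge s p with hsp | hsp
      · -- first phrase may count; rest starts aligned
        have hrest : cnt (rlz R (T.drop p)) (s - p) (e - p) ≤ 1 := by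
          have hsp0 : s - p = 0 := by omega
          rw [hsp0]
          apply cnt_rlz_zero
          rcases Nat.le_total e p with h2 | h2
          · have : e - p = 0 := by omega
            rw [this, List.take_zero]
            exact List.nil_infix
          · have key : (T.drop p).take (e - p) =
                (((T.drop s).take (e - s)).drop (p - s)) := by
              rw [List.drop_take, List.drop_drop]
              have e1 : s + (p - s) = p := by omega
              have e2 : e - s - (p - s) = e - p := by omega
              rw [e1, e2]
            rw [key]
            exact ((List.drop_suffix _ _).isInfix).trans hfrag
        split <;> omega
      · rw [if_neg (by omega)]
        have := ih (T.drop p) (by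
            simp only [List.length_drop]
            have hp1 : 1 ≤ p := by omega
            omega)
          (s - p) (e - p) (by omega) (by
            rw [List.drop_drop]
            have e1 : p + (s - p) = s := by omega
            have e2 : e - p - (s - p) = e - s := by omega
            rw [e1, e2]; exact hfrag)
        omega

def Jof (R : List ℕ) (Δ : ℕ) (T : List ℕ) : ℕ :=
  Nat.findGreatest (fun j => 3 * 2 ^ j * Δ ≤ T.length ∧ (T.take (3 * 2 ^ j * Δ)) <:+: R) T.length

def dyad (T : List ℕ) (Δ : ℕ) (J : ℕ) : List (List ℕ) :=
  (List.range (J + 1)).map (fun h => (T.drop (2 ^ h * Δ)).take (2 ^ h * Δ))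

lemma deltaCore_nil (R : List ℕ) (Δ : ℕ) : deltaCore R Δ [] = [] := by
  rw [deltaCore]; simp

lemma deltaCore_pos (R : List ℕ) (Δ : ℕ) (T : List ℕ) (hT : T ≠ []) (hΔ : Δ ≠ 0)
    (h0 : 3 * Δ ≤ T.length ∧ (T.take (3 * Δ)) <:+: R) :
    deltaCore R Δ T = (rlz R (T.take Δ) ++ dyad T Δ (Jof R Δ T))
      ++ deltaCore R Δ (T.drop (2 ^ (Jof R Δ T + 1) * Δ)) := by
  rw [deltaCore, dif_neg hT, dif_neg hΔ, dif_pos h0]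
  rfl

lemma deltaCore_neg (R : List ℕ) (Δ : ℕ) (T : List ℕ) (hT : T ≠ []) (hΔ : Δ ≠ 0)
    (h0 : ¬(3 * Δ ≤ T.length ∧ (T.take (3 * Δ)) <:+: R)) :
    deltaCore R Δ T = rlz R (T.take Δ) ++ deltaCore R Δ (T.drop Δ) := by
  rw [deltaCore, dif_neg hT, dif_neg hΔ, dif_neg h0]

lemma Jof_spec (R : List ℕ) (Δ : ℕ) (T : List ℕ)
    (h0 : 3 * Δ ≤ T.length ∧ (T.take (3 * Δ)) <:+: R) :
    3 * 2 ^ Jof R Δ T * Δ ≤ T.length ∧ (T.take (3 * 2 ^ Jof R Δ T * Δ)) <:+: R :=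
  Nat.findGreatest_spec
    (P := fun j => 3 * 2 ^ j * Δ ≤ T.length ∧ (T.take (3 * 2 ^ j * Δ)) <:+: R)
    (Nat.zero_le T.length) (by simpa using h0)

lemma dyad_flatten (T : List ℕ) (Δ : ℕ) : ∀ k,
    T.take Δ ++ (dyad T Δ k).flatten = T.take (2 ^ (k + 1) * Δ) := by
  intro k
  induction k with
  | zero =>
    have h : 2 ^ (0 + 1) * Δ = Δ + Δ := by ring
    rw [h, List.take_add]
    have hr : List.range 1 = [0] := by decide
    simp [dyad, hr]
  | succ k ih =>
    have hd : dyad T Δ (k + 1) = dyad T Δ k ++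
        [(T.drop (2 ^ (k+1) * Δ)).take (2 ^ (k+1) * Δ)] := by
      rw [dyad, dyad, List.range_succ, List.map_append]
      simp
    rw [hd, List.flatten_append, ← List.append_assoc, ih]
    have h2 : 2 ^ (k + 1 + 1) * Δ = 2 ^ (k+1) * Δ + 2 ^ (k+1) * Δ := by ring
    rw [h2, List.take_add]
    simp

lemma one_le_pow_mul {Δ : ℕ} (hΔ : Δ ≠ 0) (k : ℕ) : 1 ≤ 2 ^ k * Δ :=
  Nat.mul_pos (Nat.pow_pos (by norm_num)) (Nat.pos_of_ne_zero hΔ)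

lemma deltaCore_flatten (R : List ℕ) (Δ : ℕ) (hΔ : Δ ≠ 0) :
    ∀ n (T : List ℕ), T.length ≤ n → (deltaCore R Δ T).flatten = T := by
  intro n
  induction n with
  | zero =>
    intro T h
    have : T = [] := List.eq_nil_of_length_eq_zero (by omega)
    subst this; rw [deltaCore_nil]; rfl
  | succ n ih =>
    intro T h
    by_cases hT : T = []
    · subst hT; rw [deltaCore_nil]; rfl
    have hTpos : 0 < T.length := List.length_pos_iff.2 hT
    by_cases h0 : 3 * Δ ≤ T.length ∧ (T.take (3 * Δ)) <:+: R
    · rw [deltaCore_pos R Δ T hT hΔ h0]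
      set J := Jof R Δ T
      set off := 2 ^ (J + 1) * Δ with hoff
      rw [List.flatten_append, List.flatten_append,
        rlz_flatten R (T.take Δ).length (T.take Δ) le_rfl, dyad_flatten, ← hoff,
        ih (T.drop off) (by
          have := one_le_pow_mul hΔ (J + 1)
          simp only [List.length_drop]; omega)]
      exact List.take_append_drop _ _
    · rw [deltaCore_neg R Δ T hT hΔ h0, List.flatten_append,
        rlz_flatten R (T.take Δ).length (T.take Δ) le_rfl,
        ih (T.drop Δ) (by
          simp only [List.length_drop]
          have : Δ ≠ 0 := hΔ
          omega)]
      exact List.take_append_drop _ _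

lemma deltaCore_ne_nil (R : List ℕ) (Δ : ℕ) (hΔ : Δ ≠ 0) :
    ∀ n (T : List ℕ), T.length ≤ n → ∀ ph ∈ deltaCore R Δ T, ph ≠ [] := by
  intro n
  induction n with
  | zero =>
    intro T h
    have : T = [] := List.eq_nil_of_length_eq_zero (by omega)
    subst this; rw [deltaCore_nil]; simp
  | succ n ih =>
    intro T h ph hph
    by_cases hT : T = []
    · subst hT; rw [deltaCore_nil] at hph; simp at hph
    have hTpos : 0 < T.length := List.length_pos_iff.2 hT
    by_cases h0 : 3 * Δ ≤ T.length ∧ (T.take (3 * Δ)) <:+: R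
    · rw [deltaCore_pos R Δ T hT hΔ h0] at hph
      set J := Jof R Δ T with hJdef
      rcases List.mem_append.1 hph with hph1 | hph2
      · rcases List.mem_append.1 hph1 with hrlz | hdy
        · exact rlz_ne_nil R (T.take Δ).length (T.take Δ) le_rfl ph hrlz
        · rw [dyad, List.mem_map] at hdy
          obtain ⟨k, hk, rfl⟩ := hdy
          rw [List.mem_range] at hk
          have hspec : 3 * (2 ^ J * Δ) ≤ T.length := by
            have := (Jof_spec R Δ T h0).1
            rw [← hJdef, ← Nat.mul_assoc] at *
            omega
          have hkJ : 2 ^ k * Δ ≤ 2 ^ J * Δ :=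
            Nat.mul_le_mul_right _ (Nat.pow_le_pow_right (by norm_num) (by omega))
          have h1 : 1 ≤ 2 ^ k * Δ := one_le_pow_mul hΔ k
          intro hc
          have := congrArg List.length hc
          simp only [List.length_take, List.length_drop, List.length_nil] at this
          omega
      · refine ih (T.drop (2 ^ (J+1) * Δ)) ?_ ph hph2
        have := one_le_pow_mul hΔ (J + 1)
        simp only [List.length_drop]; omega
    · rw [deltaCore_neg R Δ T hT hΔ h0] at hph
      rcases List.mem_append.1 hph with hrlz | hph2
      · exact rlz_ne_nil R (T.take Δ).length (T.take Δ) le_rfl ph hrlz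
      · refine ih (T.drop Δ) ?_ ph hph2
        simp only [List.length_drop]
        have : Δ ≠ 0 := hΔ
        omega

/-- bound on the dyadic exponent from the occurrence in `R`. -/
lemma Jof_succ_le (R : List ℕ) (Δ : ℕ) (T : List ℕ) (hΔ : Δ ≠ 0) (hm : 2 ≤ R.length)
    (h0 : 3 * Δ ≤ T.length ∧ (T.take (3 * Δ)) <:+: R) :
    Jof R Δ T + 1 ≤ Nat.log 2 (2 * R.length / 3) := by
  set J := Jof R Δ T
  have hspec := Jof_spec R Δ T h0
  have hlen : 3 * 2 ^ J * Δ ≤ R.length := by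
    have h1 := hspec.2.length_le
    rwa [List.length_take, Nat.min_eq_left hspec.1] at h1
  have h1 : 3 * 2 ^ J ≤ R.length := by
    calc 3 * 2 ^ J = 3 * 2 ^ J * 1 := by ring
    _ ≤ 3 * 2 ^ J * Δ := Nat.mul_le_mul_left _ (Nat.pos_of_ne_zero hΔ)
    _ ≤ R.length := hlen
  have hpow : 2 ^ (J + 1) = 2 ^ J * 2 := pow_succ 2 J
  have h2 : 2 ^ (J + 1) * 3 ≤ 2 * R.length := by omega
  have h3 : 2 ^ (J + 1) ≤ 2 * R.length / 3 := (Nat.le_div_iff_mul_le (by norm_num)).2 h2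
  have h4 : 2 * R.length / 3 ≠ 0 := by
    have : 1 * 3 ≤ 2 * R.length := by omega
    have := (Nat.le_div_iff_mul_le (by norm_num : 0 < 3)).2 this
    omega
  exact (Nat.le_log_iff_pow_le (by norm_num) h4).2 h3

lemma cnt_rlz_take_zero (R T : List ℕ) (Δ e : ℕ) (hfrag : T.take e <:+: R) :
    cnt (rlz R (T.take Δ)) 0 e ≤ 1 := by
  apply cnt_rlz_zero
  rw [List.take_take]
  have h1 : T.take (min e Δ) = (T.take e).take Δ := by
    rw [List.take_take, Nat.min_comm]
  rw [h1]
  exact ((List.take_prefix _ _).isInfix).trans hfrag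

lemma cnt_rlz_take (R T : List ℕ) (Δ s e : ℕ) (hse : s ≤ e)
    (hfrag : (T.drop s).take (e - s) <:+: R) :
    cnt (rlz R (T.take Δ)) s e ≤ 2 := by
  apply cnt_rlz R (T.take Δ).length (T.take Δ) le_rfl s e hse ?h
  case h =>
    rw [List.drop_take, List.take_take]
    have h2 : (T.drop s).take (min (e - s) (Δ - s)) =
        ((T.drop s).take (e - s)).take (Δ - s) := by
      rw [List.take_take, Nat.min_comm]
    rw [h2]
    exact ((List.take_prefix _ _).isInfix).trans hfrag

def D2 (R : List ℕ) : ℕ := Nat.log 2 (2 * R.length / 3)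

lemma block_sum_pos (R T : List ℕ) (Δ : ℕ) (hΔ : Δ ≠ 0)
    (h0 : 3 * Δ ≤ T.length ∧ (T.take (3 * Δ)) <:+: R) :
    ((rlz R (T.take Δ) ++ dyad T Δ (Jof R Δ T)).map List.length).sum
      = 2 ^ (Jof R Δ T + 1) * Δ := by
  set J := Jof R Δ T with hJdef
  have hspec := Jof_spec R Δ T h0
  rw [← hJdef] at hspec
  have hoff_le : 2 ^ (J + 1) * Δ ≤ T.length := by
    have h1 : 2 ^ (J + 1) * Δ ≤ 3 * 2 ^ J * Δ := by
      rw [pow_succ]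
      have : 2 ^ J * 2 ≤ 3 * 2 ^ J := by omega
      exact Nat.mul_le_mul_right _ this
    omega
  have hfl : (rlz R (T.take Δ) ++ dyad T Δ J).flatten = T.take (2 ^ (J + 1) * Δ) := by
    rw [List.flatten_append, rlz_flatten R (T.take Δ).length (T.take Δ) le_rfl, dyad_flatten]
  rw [← List.length_flatten, hfl, List.length_take, Nat.min_eq_left hoff_le]

lemma block_cnt_le (R T : List ℕ) (Δ : ℕ) (hΔ : Δ ≠ 0) (hm : 2 ≤ R.length)
    (h0 : 3 * Δ ≤ T.length ∧ (T.take (3 * Δ)) <:+: R) (s e : ℕ) (hse : s ≤ e)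
    (hfrag : (T.drop s).take (e - s) <:+: R) :
    cnt (rlz R (T.take Δ) ++ dyad T Δ (Jof R Δ T)) s e ≤ D2 R + 2 := by
  rw [cnt_append]
  have h1 : cnt (rlz R (T.take Δ)) s e ≤ 2 := cnt_rlz_take R T Δ s e hse hfrag
  have h2 : cnt (dyad T Δ (Jof R Δ T))
      (s - ((rlz R (T.take Δ)).map List.length).sum)
      (e - ((rlz R (T.take Δ)).map List.length).sum) ≤ Jof R Δ T + 1 := by
    refine le_trans (cnt_le_length _ _ _) ?_
    rw [dyad, List.length_map, List.length_range]
  have h3 := Jof_succ_le R Δ T hΔ hm h0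
  rw [D2]
  omega

lemma main_zero (R : List ℕ) (Δ : ℕ) (hΔ : Δ ≠ 0) (hm : 2 ≤ R.length) :
    ∀ n (T : List ℕ), T.length ≤ n → ∀ e, e ≤ T.length → T.take e <:+: R →
      cnt (deltaCore R Δ T) 0 e ≤ (D2 R + 2) * g e := by
  intro n
  induction n with
  | zero =>
    intro T h e _ _
    have : T = [] := List.eq_nil_of_length_eq_zero (by omega)
    subst this; rw [deltaCore_nil]; simp
  | succ n ih =>
    intro T h e he hfrag
    rcases Nat.eq_zero_or_pos e with rfl | hepos
    · rw [cnt_e_zero]; exact Nat.zero_le _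
    by_cases hT : T = []
    · subst hT; simp at he; omega
    have hTpos : 0 < T.length := List.length_pos_iff.2 hT
    have hge : 1 ≤ g e := g_pos e (by omega)
    have hgeq : g e = g ((2 * e - 1) / 3) + 1 := g_eq e (by omega)
    obtain ⟨x, hx⟩ : ∃ x, g e = x + 1 := ⟨g e - 1, by omega⟩
    by_cases h0 : 3 * Δ ≤ T.length ∧ (T.take (3 * Δ)) <:+: R
    · rw [deltaCore_pos R Δ T hT hΔ h0, cnt_append, block_sum_pos R T Δ hΔ h0]
      set J := Jof R Δ T with hJdef
      set off := 2 ^ (J + 1) * Δ with hoff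
      have hoffpos : 1 ≤ off := one_le_pow_mul hΔ (J + 1)
      have hblock : cnt (rlz R (T.take Δ) ++ dyad T Δ J) 0 e ≤ D2 R + 2 := by
        apply block_cnt_le R T Δ hΔ hm h0 0 e (Nat.zero_le _)
        simpa using hfrag
      rcases Nat.le_total e off with heo | heo
      · have h1 : e - off = 0 := by omega
        rw [h1, cnt_e_zero, hx]
        have : (D2 R + 2) * (x + 1) = (D2 R + 2) * x + (D2 R + 2) := by ring
        omega
      · -- recursion with shrinking
        have hspec := Jof_spec R Δ T h0
        rw [← hJdef] at hspec
        have hoff_le : off ≤ T.length := by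
          rw [hoff]
          have h1 : 2 ^ (J + 1) * Δ ≤ 3 * 2 ^ J * Δ := by
            rw [pow_succ]
            exact Nat.mul_le_mul_right _ (by omega)
          omega
        have hrec := ih (T.drop off) (by simp only [List.length_drop]; omega)
          (e - off) (by simp only [List.length_drop]; omega) (by
            have h1 : (T.drop off).take (e - off) = (T.take e).drop off :=
              List.drop_take.symm
            rw [h1]
            exact ((List.drop_suffix _ _).isInfix).trans hfrag)
        have hshrink : e < 3 * off := by
          by_contra hc
          push_neg at hc
          have hP : 3 * 2 ^ (J + 1) * Δ ≤ T.length ∧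
              (T.take (3 * 2 ^ (J + 1) * Δ)) <:+: R := by
            have h3off : 3 * 2 ^ (J + 1) * Δ = 3 * off := by rw [hoff]; ring
            constructor
            · omega
            · have h1 : T.take (3 * 2 ^ (J + 1) * Δ) =
                  (T.take e).take (3 * 2 ^ (J + 1) * Δ) := by
                rw [List.take_take, Nat.min_eq_left (by omega)]
              rw [h1]
              exact ((List.take_prefix _ _).isInfix).trans hfrag
          have hJ1len : J + 1 ≤ T.length := by
            have h2 := Nat.lt_two_pow_self (n := J + 1)
            have h3 : 2 ^ (J + 1) ≤ 2 ^ (J + 1) * Δ :=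
              Nat.le_mul_of_pos_right _ (Nat.pos_of_ne_zero hΔ)
            have h4 : 2 ^ (J + 1) * Δ = off := rfl
            omega
          have := Nat.le_findGreatest (P := fun j => 3 * 2 ^ j * Δ ≤ T.length ∧
            (T.take (3 * 2 ^ j * Δ)) <:+: R) hJ1len hP
          rw [← Jof, ← hJdef] at this
          omega
        have hdiv : e - off ≤ (2 * e - 1) / 3 :=
          (Nat.le_div_iff_mul_le (by norm_num)).2 (by omega)
        have hmono : g (e - off) ≤ x := by
          have := g_mono hdiv
          omega
        have hrec2 : cnt (deltaCore R Δ (T.drop off)) (0 - off) (e - off) ≤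
            (D2 R + 2) * x := by
          have h5 : (0:ℕ) - off = 0 := by omega
          rw [h5]
          exact le_trans hrec (Nat.mul_le_mul_left _ hmono)
        rw [hx]
        have : (D2 R + 2) * (x + 1) = (D2 R + 2) * x + (D2 R + 2) := by ring
        omega
    · rw [deltaCore_neg R Δ T hT hΔ h0, cnt_append]
      have hsum : ((rlz R (T.take Δ)).map List.length).sum = min Δ T.length := by
        rw [← List.length_flatten, rlz_flatten R (T.take Δ).length (T.take Δ) le_rfl,
          List.length_take]
      rw [hsum]
      set off := min Δ T.length with hoffdef
      have hoffpos : 1 ≤ off := by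
        have : Δ ≠ 0 := hΔ
        rw [hoffdef]; omega
      have h1 : cnt (rlz R (T.take Δ)) 0 e ≤ 1 := cnt_rlz_take_zero R T Δ e hfrag
      rcases le_or_gt e off with heo | heo
      · have h2 : e - off = 0 := by omega
        rw [h2, cnt_e_zero, hx]
        have h3 : 1 ≤ (D2 R + 2) * (x + 1) := Nat.one_le_iff_ne_zero.2 (by positivity)
        omega
      · have hoffΔ : off = Δ := by rw [hoffdef]; omega
        have hshrink : e < 3 * Δ := by
          by_contra hc
          push_neg at hc
          refine h0 ⟨by omega, ?_⟩
          have h4 : T.take (3 * Δ) = (T.take e).take (3 * Δ) := by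
            rw [List.take_take, Nat.min_eq_left (by omega)]
          rw [h4]
          exact ((List.take_prefix _ _).isInfix).trans hfrag
        have hrec := ih (T.drop Δ) (by
            simp only [List.length_drop]
            have : Δ ≠ 0 := hΔ; omega)
          (e - Δ) (by simp only [List.length_drop]; omega) (by
            have h5 : (T.drop Δ).take (e - Δ) = (T.take e).drop Δ :=
              List.drop_take.symm
            rw [h5]
            exact ((List.drop_suffix _ _).isInfix).trans hfrag)
        have hdiv : e - Δ ≤ (2 * e - 1) / 3 :=
          (Nat.le_div_iff_mul_le (by norm_num)).2 (by omega)
        have hmono : g (e - Δ) ≤ x := by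
          have := g_mono hdiv
          omega
        have hrec2 : cnt (deltaCore R Δ (T.drop Δ)) (0 - off) (e - off) ≤
            (D2 R + 2) * x := by
          have h5 : (0:ℕ) - off = 0 := by omega
          rw [h5, hoffΔ]
          exact le_trans hrec (Nat.mul_le_mul_left _ hmono)
        rw [hx]
        have h6 : (D2 R + 2) * (x + 1) = (D2 R + 2) * x + (D2 R + 2) := by ring
        omega

lemma main_gen (R : List ℕ) (Δ : ℕ) (hΔ : Δ ≠ 0) (hm : 2 ≤ R.length) :
    ∀ n (T : List ℕ), T.length ≤ n → ∀ s e, s ≤ e → e ≤ T.length →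
      (T.drop s).take (e - s) <:+: R →
      cnt (deltaCore R Δ T) s e ≤ (D2 R + 2) * (1 + g (e - s)) := by
  intro n
  induction n with
  | zero =>
    intro T h s e _ _ _
    have : T = [] := List.eq_nil_of_length_eq_zero (by omega)
    subst this; rw [deltaCore_nil]; simp
  | succ n ih =>
    intro T h s e hse he hfrag
    have hdistr : (D2 R + 2) * (1 + g (e - s)) = (D2 R + 2) + (D2 R + 2) * g (e - s) := by
      ring
    rcases Nat.eq_or_lt_of_le hse with rfl | hslt
    · -- empty fragment
      have := cnt_diag (deltaCore R Δ T) s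
      omega
    by_cases hT : T = []
    · subst hT; simp at he; omega
    have hTpos : 0 < T.length := List.length_pos_iff.2 hT
    -- both branches of deltaCore give a decomposition block ++ rec with offset off
    by_cases h0 : 3 * Δ ≤ T.length ∧ (T.take (3 * Δ)) <:+: R
    · rw [deltaCore_pos R Δ T hT hΔ h0, cnt_append, block_sum_pos R T Δ hΔ h0]
      set J := Jof R Δ T with hJdef
      set off := 2 ^ (J + 1) * Δ with hoff
      have hoffpos : 1 ≤ off := one_le_pow_mul hΔ (J + 1)
      rcases le_or_gt off s with hos | hos
      · -- fragment entirely after the first meta-phrase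
        have hz : cnt (rlz R (T.take Δ) ++ dyad T Δ J) s e = 0 := by
          apply cnt_zero_of_sum_le
          rw [block_sum_pos R T Δ hΔ h0, ← hJdef, ← hoff]
          exact hos
        have hrec := ih (T.drop off) (by simp only [List.length_drop]; omega)
          (s - off) (e - off) (by omega) (by simp only [List.length_drop]; omega) (by
            rw [List.drop_drop]
            have e1 : off + (s - off) = s := by omega
            have e2 : e - off - (s - off) = e - s := by omega
            rw [e1, e2]; exact hfrag)
        have e2 : e - off - (s - off) = e - s := by omega
        rw [e2] at hrec
        omega
      · -- fragment starts inside the first meta-phrase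
        have hblock := block_cnt_le R T Δ hΔ hm h0 s e hse hfrag
        rw [← hJdef] at hblock
        have hzs : s - off = 0 := by omega
        rcases le_or_gt e off with heo | heo
        · have h2 : e - off = 0 := by omega
          rw [h2, cnt_e_zero]
          omega
        · have hrec := main_zero R Δ hΔ hm n (T.drop off)
            (by simp only [List.length_drop]; omega)
            (e - off) (by simp only [List.length_drop]; omega) (by
              have key : (T.drop off).take (e - off) =
                  (((T.drop s).take (e - s)).drop (off - s)) := by
                rw [List.drop_take, List.drop_drop]
                have e1 : s + (off - s) = off := by omega
                have e2 : e - s - (off - s) = e - off := by omega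
                rw [e1, e2]
              rw [key]
              exact ((List.drop_suffix _ _).isInfix).trans hfrag)
          have hmono : g (e - off) ≤ g (e - s) := g_mono (by omega)
          have hrec2 : cnt (deltaCore R Δ (T.drop off)) (s - off) (e - off) ≤
              (D2 R + 2) * g (e - s) := by
            rw [hzs]
            exact le_trans hrec (Nat.mul_le_mul_left _ hmono)
          omega
    · rw [deltaCore_neg R Δ T hT hΔ h0, cnt_append]
      have hsum : ((rlz R (T.take Δ)).map List.length).sum = min Δ T.length := by
        rw [← List.length_flatten, rlz_flatten R (T.take Δ).length (T.take Δ) le_rfl,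
          List.length_take]
      rw [hsum]
      set off := min Δ T.length with hoffdef
      have hoffpos : 1 ≤ off := by
        have : Δ ≠ 0 := hΔ
        rw [hoffdef]; omega
      rcases le_or_gt off s with hos | hos
      · have hz : cnt (rlz R (T.take Δ)) s e = 0 := by
          apply cnt_zero_of_sum_le
          rw [hsum]
          exact hos
        have hoffΔ : off = Δ := by
          have : s < T.length := by omega
          rw [hoffdef]; omega
        have hrec := ih (T.drop Δ) (by
            simp only [List.length_drop]
            have : Δ ≠ 0 := hΔ; omega)
          (s - Δ) (e - Δ) (by omega) (by simp only [List.length_drop]; omega) (by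
            rw [List.drop_drop]
            have e1 : Δ + (s - Δ) = s := by omega
            have e2 : e - Δ - (s - Δ) = e - s := by omega
            rw [e1, e2]; exact hfrag)
        have e2 : e - Δ - (s - Δ) = e - s := by omega
        rw [e2] at hrec
        rw [hoffΔ]
        omega
      · have hblock : cnt (rlz R (T.take Δ)) s e ≤ 2 := cnt_rlz_take R T Δ s e hse hfrag
        have hzs : s - off = 0 := by omega
        rcases le_or_gt e off with heo | heo
        · have h2 : e - off = 0 := by omega
          rw [h2, cnt_e_zero]
          rw [D2] at *
          omega
        · have hoffΔ : off = Δ := by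
            have : e ≤ T.length := he
            rw [hoffdef]; omega
          have hrec := main_zero R Δ hΔ hm n (T.drop Δ) (by
              simp only [List.length_drop]
              have : Δ ≠ 0 := hΔ; omega)
            (e - Δ) (by simp only [List.length_drop]; omega) (by
              have key : (T.drop Δ).take (e - Δ) =
                  (((T.drop s).take (e - s)).drop (Δ - s)) := by
                rw [List.drop_take, List.drop_drop]
                have e1 : s + (Δ - s) = Δ := by omega
                have e2 : e - s - (Δ - s) = e - Δ := by omega
                rw [e1, e2]
              rw [key]
              exact ((List.drop_suffix _ _).isInfix).trans hfrag)
          have hmono : g (e - Δ) ≤ g (e - s) := g_mono (by omega)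
          have hrec2 : cnt (deltaCore R Δ (T.drop Δ)) (s - off) (e - off) ≤
              (D2 R + 2) * g (e - s) := by
            rw [hzs, hoffΔ]
            exact le_trans hrec (Nat.mul_le_mul_left _ hmono)
          omega

lemma g_vals : g 1 = 1 ∧ g 2 = 2 ∧ g 3 = 2 ∧ g 4 = 3 ∧ g 7 = 4 := by
  have hg1 : g 1 = 1 := by rw [g_eq 1 (by norm_num)]; norm_num [g_zero]
  have hg2 : g 2 = 2 := by rw [g_eq 2 (by norm_num)]; norm_num [hg1]
  have hg3 : g 3 = 2 := by rw [g_eq 3 (by norm_num)]; norm_num [hg1]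
  have hg4 : g 4 = 3 := by rw [g_eq 4 (by norm_num)]; norm_num [hg2]
  have hg7 : g 7 = 4 := by rw [g_eq 7 (by norm_num)]; norm_num [hg4]
  exact ⟨hg1, hg2, hg3, hg4, hg7⟩

lemma nat_log_le_logb (m : ℕ) (hm : 1 ≤ m) :
    (Nat.log 2 m : ℝ) ≤ Real.logb 2 m := by
  have h1 : (2:ℕ) ^ Nat.log 2 m ≤ m := Nat.pow_log_le_self 2 (by omega)
  have h2 : ((2:ℝ)) ^ Nat.log 2 m ≤ (m:ℝ) := by exact_mod_cast h1
  have h3 : Real.logb 2 ((2:ℝ) ^ Nat.log 2 m) ≤ Real.logb 2 (m:ℝ) :=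
    Real.logb_le_logb_of_le (by norm_num) (by positivity) h2
  calc (Nat.log 2 m : ℝ) = Real.logb 2 ((2:ℝ) ^ Nat.log 2 m) := by
        rw [Real.logb_pow, Real.logb_self_eq_one] <;> norm_num
  _ ≤ _ := h3

lemma one_le_logb (m : ℕ) (hm : 2 ≤ m) : 1 ≤ Real.logb 2 m := by
  have h1 : Real.logb 2 (2:ℝ) ≤ Real.logb 2 (m:ℝ) :=
    Real.logb_le_logb_of_le (by norm_num) (by norm_num) (by exact_mod_cast hm)
  rwa [Real.logb_self_eq_one (by norm_num)] at h1

lemma final_bound (m : ℕ) (hm : 2 ≤ m) :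
    (((Nat.log 2 (2 * m / 3) + 2) * (1 + g m) : ℕ) : ℝ)
      ≤ 8 * (Real.logb 2 m) ^ 2 := by
  obtain ⟨hg1, hg2, hg3, hg4, hg7⟩ := g_vals
  have hL1 : 1 ≤ Real.logb 2 m := one_le_logb m hm
  have hDL : (Nat.log 2 m : ℝ) ≤ Real.logb 2 m := nat_log_le_logb m (by omega)
  have hLpos : 0 ≤ Real.logb 2 m := by linarith
  -- generic: if X ≤ 8 * D^2 in ℕ with D = Nat.log 2 m, conclude
  have hgen : ∀ X : ℕ, X ≤ 8 * (Nat.log 2 m)^2 →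
      ((X:ℕ):ℝ) ≤ 8 * (Real.logb 2 m)^2 := by
    intro X hX
    have h1 : ((X:ℕ):ℝ) ≤ 8 * ((Nat.log 2 m : ℝ))^2 := by
      have := (Nat.cast_le (α := ℝ)).2 hX
      push_cast at this
      linarith
    have h2 : ((Nat.log 2 m : ℝ))^2 ≤ (Real.logb 2 m)^2 := by
      apply pow_le_pow_left₀ (by positivity) hDL
    linarith
  rcases eq_or_lt_of_le hm with h2 | h3
  · -- m = 2
    have hm2 : m = 2 := h2.symm
    subst hm2
    have hlog : Nat.log 2 (2 * 2 / 3) = 0 := by norm_num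
    apply hgen
    rw [hlog, hg2]
    have : Nat.log 2 2 = 1 := Nat.log_eq_of_pow_le_of_lt_pow (by norm_num) (by norm_num)
    rw [this]
    norm_num
  rcases eq_or_lt_of_le (show 3 ≤ m by omega) with h3' | h4
  · -- m = 3
    have hm3 : m = 3 := h3'.symm
    subst hm3
    have hlog : Nat.log 2 (2 * 3 / 3) = 1 :=
      Nat.log_eq_of_pow_le_of_lt_pow (by norm_num) (by norm_num)
    rw [hlog, hg3]
    have hL32 : (3:ℝ)/2 ≤ Real.logb 2 3 := by
      rw [Real.le_logb_iff_rpow_le (by norm_num) (by norm_num)]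
      have ha : (0:ℝ) < (2:ℝ) ^ ((3:ℝ)/2) := Real.rpow_pos_of_pos (by norm_num) _
      have hsq : ((2:ℝ) ^ ((3:ℝ)/2)) ^ (2:ℕ) = 8 := by
        rw [← Real.rpow_natCast ((2:ℝ) ^ ((3:ℝ)/2)) 2, ← Real.rpow_mul (by norm_num)]
        norm_num
      nlinarith
    have : ((3:ℝ)) ^ 2 ≤ 4 * (Real.logb 2 3) ^ 2 := by nlinarith
    push_cast
    nlinarith
  rcases lt_or_ge m 8 with h8 | h8
  · -- 4 ≤ m ≤ 7
    have hD : Nat.log 2 m = 2 :=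
      Nat.log_eq_of_pow_le_of_lt_pow (by omega) (by norm_num; omega)
    apply hgen
    have hD2 : Nat.log 2 (2 * m / 3) ≤ 2 := by
      have h1 : 2 * m / 3 < 2 ^ 3 := by omega
      rcases Nat.eq_zero_or_pos (2 * m / 3) with hz | hp
      · rw [hz]; simp
      · have := Nat.log_lt_of_lt_pow (by omega) h1
        omega
    have hgm : g m ≤ 4 := by
      have := g_mono (show m ≤ 7 by omega)
      omega
    rw [hD]
    have : (Nat.log 2 (2 * m / 3) + 2) * (1 + g m) ≤ (2 + 2) * (1 + 4) :=
      Nat.mul_le_mul (by omega) (by omega)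
    omega
  · -- m ≥ 8
    have hD : 3 ≤ Nat.log 2 m := by
      have : (2:ℕ)^3 ≤ m := by omega
      exact (Nat.le_log_iff_pow_le (by norm_num) (by omega)).2 this
    apply hgen
    set D := Nat.log 2 m with hDdef
    have hD2 : Nat.log 2 (2 * m / 3) ≤ D := by
      apply Nat.log_mono_right
      exact Nat.div_le_of_le_mul (by omega)
    have hgm : g m ≤ 2 * D + 4 := g_le m (by omega)
    have h1 : (Nat.log 2 (2 * m / 3) + 2) * (1 + g m) ≤ (D + 2) * (2 * D + 5) :=
      Nat.mul_le_mul (by omega) (by omega)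
    have h2 : (D + 2) * (2 * D + 5) ≤ 8 * D ^ 2 := by nlinarith
    omega

lemma flatten_seg (fs : List (List ℕ)) (T : List ℕ) (hfl : fs.flatten = T) (i k : ℕ) :
    (T.drop (startOf fs i)).take (startOf fs (i + k) - startOf fs i)
      = ((fs.drop i).take k).flatten := by
  have h1 : T = (fs.take i).flatten ++ (fs.drop i).flatten := by
    rw [← List.flatten_append, List.take_append_drop, hfl]
  have hs : startOf fs i = (fs.take i).flatten.length := by
    rw [List.length_flatten, startOf]
  have hdrop : T.drop (startOf fs i) = (fs.drop i).flatten := by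
    rw [h1, hs, List.drop_left]
  have hlen : startOf fs (i + k) - startOf fs i = (((fs.drop i).take k).flatten).length := by
    rw [List.length_flatten, startOf, startOf, List.take_add, List.map_append,
      List.sum_append]
    omega
  have h2 : (fs.drop i).flatten = ((fs.drop i).take k).flatten ++ ((fs.drop i).drop k).flatten := by
    rw [← List.flatten_append, List.take_append_drop]
  rw [hdrop, hlen, h2, List.take_left]

end Scratch

theorem stmt8 (R T : List ℕ) (Δ : ℕ) (hΔ : 1 ≤ Δ) (hm : 2 ≤ R.length) :
    (∀ s e : ℕ, s ≤ e → e ≤ T.length → ((T.drop s).take (e - s)) <:+: R →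
      (((Finset.range (deltaCore R Δ T).length).filter (fun j =>
          startOf (deltaCore R Δ T) j < e ∧
          s < startOf (deltaCore R Δ T) j + ((deltaCore R Δ T).getD j []).length)).card : ℝ)
        ≤ 8 * (Real.logb 2 R.length) ^ 2) ∧
    AlphaOptimal R (⌈8 * (Real.logb 2 R.length) ^ 2 + 2⌉₊) (deltaCore R Δ T) := by
  have hΔ' : Δ ≠ 0 := by omega
  have hne : ∀ ph ∈ deltaCore R Δ T, ph ≠ [] :=
    Scratch.deltaCore_ne_nil R Δ hΔ' T.length T le_rfl
  have hflat : (deltaCore R Δ T).flatten = T :=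
    Scratch.deltaCore_flatten R Δ hΔ' T.length T le_rfl
  have part1 : ∀ s e : ℕ, s ≤ e → e ≤ T.length → ((T.drop s).take (e - s)) <:+: R →
      (((Finset.range (deltaCore R Δ T).length).filter (fun j =>
          startOf (deltaCore R Δ T) j < e ∧
          s < startOf (deltaCore R Δ T) j + ((deltaCore R Δ T).getD j []).length)).card : ℝ)
        ≤ 8 * (Real.logb 2 R.length) ^ 2 := by
    intro s e hse he hfrag
    rw [← Scratch.cnt_eq _ hne s e]
    have h1 := Scratch.main_gen R Δ hΔ' hm T.length T le_rfl s e hse he hfrag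
    unfold Scratch.D2 at h1
    have hlen : e - s ≤ R.length := by
      have h2 := hfrag.length_le
      rw [List.length_take, List.length_drop] at h2
      omega
    have h3 : 1 + Scratch.g (e - s) ≤ 1 + Scratch.g R.length := by
      have := Scratch.g_mono hlen
      omega
    have h4 : Scratch.cnt (deltaCore R Δ T) s e ≤
        (Nat.log 2 (2 * R.length / 3) + 2) * (1 + Scratch.g R.length) :=
      le_trans h1 (Nat.mul_le_mul_left _ h3)
    calc ((Scratch.cnt (deltaCore R Δ T) s e : ℕ) : ℝ)
        ≤ (((Nat.log 2 (2 * R.length / 3) + 2) * (1 + Scratch.g R.length) : ℕ) : ℝ) :=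
          Nat.cast_le.2 h4
    _ ≤ 8 * (Real.logb 2 R.length) ^ 2 := Scratch.final_bound R.length hm
  refine ⟨part1, ?_⟩
  intro i hi hcontra
  set fs := deltaCore R Δ T with hfs
  set α := ⌈8 * (Real.logb 2 (R.length : ℝ)) ^ 2 + 2⌉₊ with hα
  set s := startOf fs i with hsdef
  set e := startOf fs (i + α) with hedef
  have hse : s ≤ e := Scratch.startOf_mono fs (Nat.le_add_right _ _)
  have heT : e ≤ T.length := by
    have h1 := Scratch.startOf_le_sum fs (i + α)
    have h2 : (fs.map List.length).sum = T.length := by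
      rw [← List.length_flatten, hflat]
    omega
  have hfrag_eq := Scratch.flatten_seg fs T hflat i α
  have hfrag : (T.drop s).take (e - s) <:+: R := by
    rw [hsdef, hedef, hfrag_eq]
    exact hcontra
  have hcard := part1 s e hse heT hfrag
  have hsub : Finset.Ico i (i + α) ⊆ (Finset.range fs.length).filter (fun j =>
      startOf fs j < e ∧ s < startOf fs j + (fs.getD j []).length) := by
    intro j hj
    rw [Finset.mem_Ico] at hj
    have hjlen : j < fs.length := by omega
    have hlenpos : 0 < (fs.getD j []).length := by
      have hmem : fs.getD j [] ≠ [] := hne _ (by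
        rw [List.getD_eq_getElem _ _ hjlen]; exact List.getElem_mem _)
      exact List.length_pos_iff.2 hmem
    have hsucc : startOf fs (j + 1) = startOf fs j + (fs.getD j []).length :=
      Scratch.startOf_succ fs j hjlen
    have hmono1 : startOf fs (j + 1) ≤ e := Scratch.startOf_mono fs (by omega)
    have hmono2 : s ≤ startOf fs j := Scratch.startOf_mono fs hj.1
    rw [Finset.mem_filter, Finset.mem_range]
    exact ⟨hjlen, by omega, by omega⟩
  have hcard2 : α ≤ ((Finset.range fs.length).filter (fun j =>
      startOf fs j < e ∧ s < startOf fs j + (fs.getD j []).length)).card := by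
    have h5 := Finset.card_le_card hsub
    rwa [Nat.card_Ico, Nat.add_sub_cancel_left] at h5
  have hceil : (8 * (Real.logb 2 (R.length : ℝ)) ^ 2 + 2 : ℝ) ≤ (α : ℝ) := Nat.le_ceil _
  have hfin : (α : ℝ) ≤ 8 * (Real.logb 2 (R.length : ℝ)) ^ 2 :=
    le_trans (Nat.cast_le.2 hcard2) hcard
  linarith
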